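/- (Absolute-value bound on the gradient product of the one-dimensional discrete heat kernel.) For t ≥ 0 and x ∈ ℤ let p_t(x) := (1/(2π))·∫_{−π}^{π} e^{t(cos k − 1)}·cos(kx) dk, and define ∇⁺f(x) := f(x+1) − f(x) and ∇⁻f(x) := f(x−1) − f(x). Then Σ_{x ∈ ℤ} ∫_0^∞ |∇⁺p_t(x)·∇⁻p_t(x)| dt < 1. -/

import Mathlib

open MeasureTheory

/-- The transition probability of the continuous-time simple symmetric random walk on `ℤ`
with generator `½Δ`, given by its Fourier formula. -/
noncomputable def hk1 (t : ℝ) (x : ℤ) : ℝ :=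
  (1 / (2 * Real.pi)) * ∫ k in Set.Icc (-Real.pi) Real.pi,
    Real.exp (t * (Real.cos k - 1)) * Real.cos (k * (x : ℝ))

namespace Stmt10

open Real Set intervalIntegral

lemma neg_pi_le_pi : -π ≤ π := by linarith [Real.pi_pos]

lemma hk1_eq (t : ℝ) (x : ℤ) :
    hk1 t x = (1 / (2 * π)) * ∫ k in (-π)..π,
      Real.exp (t * (Real.cos k - 1)) * Real.cos (k * (x : ℝ)) := by
  rw [hk1, intervalIntegral.integral_of_le neg_pi_le_pi,
    MeasureTheory.integral_Icc_eq_integral_Ioc]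

lemma cont_integrand (t : ℝ) (x : ℤ) :
    Continuous fun k : ℝ => Real.exp (t * (Real.cos k - 1)) * Real.cos (k * (x : ℝ)) := by
  fun_prop

lemma integral_cos_int (x : ℤ) (hx : x ≠ 0) :
    ∫ k in (-π)..π, Real.cos (k * (x : ℝ)) = 0 := by
  have hx' : (x : ℝ) ≠ 0 := Int.cast_ne_zero.mpr hx
  rw [intervalIntegral.integral_comp_mul_right Real.cos hx']
  rw [integral_cos]
  have h1 : Real.sin (π * x) = 0 := by
    rw [mul_comm]; exact Real.sin_int_mul_pi x
  have h2 : Real.sin (-π * x) = 0 := by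
    rw [neg_mul, Real.sin_neg, mul_comm, Real.sin_int_mul_pi x, neg_zero]
  simp [h1, h2]

lemma integral_one_sub_cos :
    ∫ k in (-π)..π, (1 - Real.cos k) = 2 * π := by
  rw [intervalIntegral.integral_sub ((continuous_const : Continuous fun _ : ℝ => (1:ℝ)).intervalIntegrable _ _)
    (Real.continuous_cos.intervalIntegrable _ _)]
  simp [integral_cos]
  ring

lemma exp_sub_one_bound (t : ℝ) (ht : 0 ≤ t) (k : ℝ) :
    |Real.exp (t * (Real.cos k - 1)) - 1| ≤ t * (1 - Real.cos k) := by
  have hc : Real.cos k ≤ 1 := Real.cos_le_one k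
  have h0 : t * (Real.cos k - 1) ≤ 0 := by nlinarith
  have h1 : Real.exp (t * (Real.cos k - 1)) ≤ 1 := Real.exp_le_one_iff.mpr h0
  have h2 : 1 - t * (1 - Real.cos k) ≤ Real.exp (t * (Real.cos k - 1)) := by
    have := Real.add_one_le_exp (t * (Real.cos k - 1))
    nlinarith
  rw [abs_le]
  constructor <;> nlinarith

lemma hk1_abs_le (t : ℝ) (ht : 0 ≤ t) (x : ℤ) (hx : x ≠ 0) : |hk1 t x| ≤ t := by
  rw [hk1_eq]
  have key : ∫ k in (-π)..π, Real.exp (t * (Real.cos k - 1)) * Real.cos (k * (x : ℝ))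
      = ∫ k in (-π)..π, (Real.exp (t * (Real.cos k - 1)) - 1) * Real.cos (k * (x : ℝ)) := by
    rw [show (fun k => (Real.exp (t * (Real.cos k - 1)) - 1) * Real.cos (k * (x : ℝ)))
        = fun k => Real.exp (t * (Real.cos k - 1)) * Real.cos (k * (x : ℝ))
          - Real.cos (k * (x : ℝ)) by ext k; ring]
    rw [intervalIntegral.integral_sub ((cont_integrand t x).intervalIntegrable _ _)
      ((by fun_prop : Continuous fun k : ℝ => Real.cos (k * (x:ℝ))).intervalIntegrable _ _),
      integral_cos_int x hx, sub_zero]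
  rw [key, abs_mul]
  have habs : |(1 : ℝ) / (2 * π)| = 1 / (2*π) := by
    rw [abs_of_pos]; positivity
  rw [habs]
  have hb : |∫ k in (-π)..π, (Real.exp (t * (Real.cos k - 1)) - 1) * Real.cos (k * (x : ℝ))|
      ≤ ∫ k in (-π)..π, t * (1 - Real.cos k) := by
    refine (intervalIntegral.abs_integral_le_integral_abs neg_pi_le_pi).trans ?_
    refine intervalIntegral.integral_mono_on neg_pi_le_pi ?_ ?_ ?_
    · have c2 : Continuous fun k : ℝ =>
          (Real.exp (t * (Real.cos k - 1)) - 1) * Real.cos (k * (x : ℝ)) := by fun_prop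
      exact c2.abs.intervalIntegrable _ _
    · exact (by fun_prop : Continuous fun k : ℝ => t * (1 - Real.cos k)).intervalIntegrable _ _
    · intro k _
      rw [abs_mul]
      calc |Real.exp (t * (Real.cos k - 1)) - 1| * |Real.cos (k * (x:ℝ))|
          ≤ (t * (1 - Real.cos k)) * 1 := by
            apply mul_le_mul (exp_sub_one_bound t ht k) (Real.abs_cos_le_one _)
              (abs_nonneg _) (by nlinarith [Real.cos_le_one k])
        _ = t * (1 - Real.cos k) := by ring
  calc (1/(2*π)) * |∫ k in (-π)..π, (Real.exp (t * (Real.cos k - 1)) - 1) * Real.cos (k * (x:ℝ))|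
      ≤ (1/(2*π)) * ∫ k in (-π)..π, t * (1 - Real.cos k) := by
        apply mul_le_mul_of_nonneg_left hb (by positivity)
    _ = t := by
        rw [intervalIntegral.integral_const_mul, integral_one_sub_cos]
        field_simp


lemma hk1_zero_ge (t : ℝ) (ht : 0 ≤ t) : 1 - t ≤ hk1 t 0 := by
  rw [hk1_eq]
  have e1 : ∀ k : ℝ, Real.exp (t * (Real.cos k - 1)) * Real.cos (k * ((0:ℤ):ℝ))
      = Real.exp (t * (Real.cos k - 1)) := by intro k; simp
  rw [intervalIntegral.integral_congr (fun k _ => e1 k)]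
  have hb : ∫ k in (-π)..π, (1 - t * (1 - Real.cos k))
      ≤ ∫ k in (-π)..π, Real.exp (t * (Real.cos k - 1)) := by
    refine intervalIntegral.integral_mono_on neg_pi_le_pi
      ((by fun_prop : Continuous fun k : ℝ => 1 - t*(1 - Real.cos k)).intervalIntegrable _ _)
      ((by fun_prop : Continuous fun k : ℝ => Real.exp (t * (Real.cos k - 1))).intervalIntegrable _ _)
      (fun k _ => ?_)
    have := Real.add_one_le_exp (t * (Real.cos k - 1))
    nlinarith
  have hv : ∫ k in (-π)..π, (1 - t * (1 - Real.cos k))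
      = 2*π - t * (2*π) := by
    rw [show (fun k : ℝ => 1 - t * (1 - Real.cos k))
      = fun k : ℝ => (1:ℝ) - t * (1 - Real.cos k) from rfl]
    rw [intervalIntegral.integral_sub
      ((continuous_const : Continuous fun _ : ℝ => (1:ℝ)).intervalIntegrable _ _)
      ((by fun_prop : Continuous fun k : ℝ => t * (1 - Real.cos k)).intervalIntegrable _ _),
      intervalIntegral.integral_const_mul, integral_one_sub_cos]
    simp; ring
  have hpi := Real.pi_pos
  calc 1 - t = (1/(2*π)) * (2*π - t*(2*π)) := by field_simp
    _ ≤ (1/(2*π)) * ∫ k in (-π)..π, Real.exp (t * (Real.cos k - 1)) := by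
        apply mul_le_mul_of_nonneg_left _ (by positivity)
        rw [← hv]; exact hb

/-- discrete gradient -/
noncomputable def g (t : ℝ) (x : ℤ) : ℝ := hk1 t (x+1) - hk1 t x

lemma g_zero_bound {t : ℝ} (ht : t ∈ Set.Ioc (0:ℝ) (1/8)) : 3/4 ≤ |g t 0| := by
  obtain ⟨ht0, ht8⟩ := ht
  have h1 : |hk1 t 1| ≤ t := hk1_abs_le t ht0.le 1 (by norm_num)
  have h0 : 1 - t ≤ hk1 t 0 := hk1_zero_ge t ht0.le
  have : g t 0 ≤ 2*t - 1 := by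
    have := abs_le.mp h1
    simp only [g, zero_add]
    linarith [this.2]
  calc (3:ℝ)/4 ≤ -(g t 0) := by linarith
    _ ≤ |g t 0| := neg_le_abs (g t 0)

lemma g_one_bound {t : ℝ} (ht : t ∈ Set.Ioc (0:ℝ) (1/8)) : |g t 1| ≤ 1/4 := by
  obtain ⟨ht0, ht8⟩ := ht
  have h1 : |hk1 t 1| ≤ t := hk1_abs_le t ht0.le 1 (by norm_num)
  have h2 : |hk1 t 2| ≤ t := hk1_abs_le t ht0.le 2 (by norm_num)
  have : g t 1 = hk1 t 2 - hk1 t 1 := by norm_num [g]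
  rw [this]
  calc |hk1 t 2 - hk1 t 1| ≤ |hk1 t 2| + |hk1 t 1| := abs_sub _ _
    _ ≤ 1/4 := by linarith

lemma corr_bound {t : ℝ} (ht : t ∈ Set.Ioc (0:ℝ) (1/8)) :
    (1:ℝ)/8 ≤ (1/2) * (|g t 1| - |g t 0|)^2 := by
  have h0 := g_zero_bound ht
  have h1 := g_one_bound ht
  nlinarith [abs_nonneg (g t 1)]

/-- continuity of parametric integrals of the relevant shape -/
lemma continuous_setIntegral_exp (a c : ℝ → ℝ) (ha : Continuous a) (hc : Continuous c)
    (C : ℝ) (haC : ∀ k, |a k| ≤ C) (hcC : ∀ k, |c k| ≤ C) :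
    Continuous fun t : ℝ => ∫ k in Icc (-π) π, Real.exp (t * a k) * c k := by
  have hC : 0 ≤ C := (abs_nonneg _).trans (haC 0)
  rw [continuous_iff_continuousAt]
  intro t₀
  apply MeasureTheory.continuousAt_of_dominated
    (bound := fun _ => Real.exp ((|t₀|+1) * C) * C)
  · filter_upwards with t
    exact ((Real.continuous_exp.comp (continuous_const.mul ha)).mul hc).aestronglyMeasurable
  · filter_upwards [Icc_mem_nhds (show t₀ - 1 < t₀ by linarith) (show t₀ < t₀+1 by linarith)]
      with t ht
    filter_upwards with k
    rw [norm_mul, Real.norm_eq_abs, Real.norm_eq_abs, Real.abs_exp]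
    have h1 : t * a k ≤ (|t₀|+1) * C := by
      calc t * a k ≤ |t * a k| := le_abs_self _
        _ = |t| * |a k| := abs_mul _ _
        _ ≤ (|t₀|+1) * C := by
            apply mul_le_mul _ (haC k) (abs_nonneg _) (by positivity)
            obtain ⟨h1, h2⟩ := ht
            rw [abs_le]
            constructor
            · linarith [neg_abs_le t₀]
            · linarith [le_abs_self t₀]
    exact mul_le_mul (Real.exp_le_exp.mpr h1) (hcC k) (abs_nonneg _) (Real.exp_nonneg _)
  · exact (MeasureTheory.integrableOn_const measure_Icc_lt_top.ne)
  · filter_upwards with k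
    exact (Real.continuous_exp.comp (continuous_mul_right _ |>.comp continuous_id)
      |>.mul continuous_const).continuousAt.congr (by
        filter_upwards with t; rfl) |>.congr (Filter.EventuallyEq.refl _ _)

lemma continuous_hk1 (x : ℤ) : Continuous fun t => hk1 t x := by
  unfold hk1
  apply continuous_const.mul
  exact continuous_setIntegral_exp (fun k => Real.cos k - 1) (fun k => Real.cos (k * (x:ℝ)))
    (by fun_prop) (by fun_prop) 2
    (fun k => by show |Real.cos k - 1| ≤ 2; rw [abs_le]; constructor <;>
      nlinarith [Real.cos_le_one k, Real.neg_one_le_cos k])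
    (fun k => by show |Real.cos (k * (x:ℝ))| ≤ 2; rw [abs_le]; constructor <;>
      nlinarith [Real.cos_le_one (k * (x:ℝ)), Real.neg_one_le_cos (k * (x:ℝ))])

lemma continuous_g (x : ℤ) : Continuous fun t => g t x :=
  (continuous_hk1 (x+1)).sub (continuous_hk1 x)

/-- the Parseval upper bound function -/
noncomputable def B (t : ℝ) : ℝ :=
  (1/(2*π)) * ∫ k in Icc (-π) π, Real.exp (t * (2*(Real.cos k - 1))) * (2 - 2*Real.cos k)

lemma continuous_B : Continuous B := by
  apply continuous_const.mul
  exact continuous_setIntegral_exp (fun k => 2*(Real.cos k - 1)) (fun k => 2 - 2*Real.cos k)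
    (by fun_prop) (by fun_prop) 4
    (fun k => by show |2*(Real.cos k - 1)| ≤ 4; rw [abs_le]; constructor <;>
      nlinarith [Real.cos_le_one k, Real.neg_one_le_cos k])
    (fun k => by show |2 - 2*Real.cos k| ≤ 4; rw [abs_le]; constructor <;>
      nlinarith [Real.cos_le_one k, Real.neg_one_le_cos k])

lemma B_nonneg (t : ℝ) : 0 ≤ B t := by
  apply mul_nonneg (by positivity)
  apply MeasureTheory.setIntegral_nonneg measurableSet_Icc
  intro k _
  have := Real.cos_le_one k
  exact mul_nonneg (Real.exp_nonneg _) (by linarith)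


/-! ### Fourier theory on `AddCircle (2 * π)` -/

open Complex

instance : Fact ((0:ℝ) < 2*π) := ⟨by linarith [Real.pi_pos]⟩

lemma fourier_coe (n : ℤ) (k : ℝ) :
    fourier n (k : AddCircle (2*π)) = Complex.exp (n * k * Complex.I) := by
  rw [fourier_coe_apply]
  congr 1
  have hπ : ((π : ℝ) : ℂ) ≠ 0 := by
    simp only [ne_eq, Complex.ofReal_eq_zero]
    exact Real.pi_ne_zero
  push_cast
  field_simp

/-- The function `k ↦ exp (t (cos k - 1)) (e^{ik} - 1)` as a continuous map on the circle. -/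
noncomputable def Fc (t : ℝ) : C(AddCircle (2*π), ℂ) :=
  ⟨fun z => Complex.exp (((t * ((fourier 1 z).re - 1)) : ℝ) : ℂ) * (fourier 1 z - 1),
    (Complex.continuous_exp.comp (Complex.continuous_ofReal.comp (continuous_const.mul
      ((Complex.continuous_re.comp (map_continuous (fourier 1))).sub continuous_const)))).mul
      ((map_continuous (fourier 1)).sub continuous_const)⟩

lemma Fc_coe (t : ℝ) (k : ℝ) :
    Fc t (k : AddCircle (2*π))
      = (Real.exp (t * (Real.cos k - 1)) : ℂ) * (Complex.exp (k * Complex.I) - 1) := by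
  show Complex.exp _ * _ = _
  rw [Complex.ofReal_exp]
  congr 2
  · congr 1
    push_cast
    congr 1
    rw [fourier_coe]
    push_cast
    rw [one_mul, Complex.exp_ofReal_mul_I_re]
  · rw [fourier_coe]; push_cast; rw [one_mul]

lemma norm_Fc_sq (t : ℝ) (k : ℝ) :
    ‖Fc t (k : AddCircle (2*π))‖^2
      = Real.exp (t * (2*(Real.cos k - 1))) * (2 - 2*Real.cos k) := by
  rw [Fc_coe, norm_mul, mul_pow, Complex.norm_real, Real.norm_eq_abs, Real.abs_exp]
  have h1 : Real.exp (t * (Real.cos k - 1)) ^ 2 = Real.exp (t * (2*(Real.cos k - 1))) := by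
    rw [sq, ← Real.exp_add]
    congr 1
    ring
  have h2 : ‖Complex.exp ((k:ℂ) * Complex.I) - 1‖^2 = 2 - 2*Real.cos k := by
    rw [Complex.sq_norm, Complex.normSq_apply]
    have hre : (Complex.exp ((k:ℂ) * Complex.I) - 1).re = Real.cos k - 1 := by
      rw [Complex.sub_re, Complex.exp_ofReal_mul_I_re, Complex.one_re]
    have him : (Complex.exp ((k:ℂ) * Complex.I) - 1).im = Real.sin k := by
      rw [Complex.sub_im, Complex.exp_ofReal_mul_I_im, Complex.one_im, sub_zero]
    rw [hre, him]
    nlinarith [Real.sin_sq_add_cos_sq k]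
  rw [h1, h2]


open AddCircle

lemma norm_toLp_Fc (t : ℝ) :
    ‖ContinuousMap.toLp (E := ℂ) 2 (haarAddCircle (T := 2*π)) ℂ (Fc t)‖^2 = B t := by
  set ft := ContinuousMap.toLp (E := ℂ) 2 (haarAddCircle (T := 2*π)) ℂ (Fc t) with hft
  have h1 : (inner ℂ ft ft : ℂ) = ∫ x, (starRingEnd ℂ) (Fc t x) * Fc t x ∂haarAddCircle :=
    (ContinuousMap.inner_toLp haarAddCircle (Fc t) (Fc t)).trans
      (MeasureTheory.integral_congr_ae (Filter.Eventually.of_forall fun x => mul_comm _ _))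
  have hint : Integrable (fun x => (starRingEnd ℂ) (Fc t x) * Fc t x) haarAddCircle := by
    have := MeasureTheory.L2.integrable_inner (𝕜 := ℂ) ft ft
    simp only [RCLike.inner_apply] at this
    refine this.congr ?_
    filter_upwards [ContinuousMap.coeFn_toLp (p := 2) (𝕜 := ℂ) haarAddCircle (Fc t)] with z hz
    rw [hz, mul_comm]
  have h2 : ‖ft‖^2 = RCLike.re (inner ℂ ft ft : ℂ) := norm_sq_eq_re_inner (𝕜 := ℂ) ft
  rw [h2, h1, ← _root_.integral_re hint]
  have h3 : ∀ z : AddCircle (2*π), RCLike.re ((starRingEnd ℂ) (Fc t z) * Fc t z) = ‖Fc t z‖^2 := by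
    intro z
    rw [mul_comm, Complex.mul_conj, RCLike.re_to_complex, Complex.ofReal_re,
      Complex.normSq_eq_norm_sq]
  rw [MeasureTheory.integral_congr_ae (Filter.Eventually.of_forall h3)]
  -- now convert the haar integral to an interval integral
  have h4 : ∫ z : AddCircle (2*π), ‖Fc t z‖^2 ∂haarAddCircle
      = (1/(2*π)) * ∫ z : AddCircle (2*π), ‖Fc t z‖^2 := by
    rw [volume_eq_smul_haarAddCircle, MeasureTheory.integral_smul_measure,
      ENNReal.toReal_ofReal (by positivity : (0:ℝ) ≤ 2*π), smul_eq_mul]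
    have hpi := Real.pi_pos
    field_simp
  rw [h4, ← AddCircle.integral_preimage (2*π) (-π) (fun z => ‖Fc t z‖^2),
    show -π + 2*π = π by ring]
  rw [B, MeasureTheory.integral_Icc_eq_integral_Ioc]
  congr 1
  exact MeasureTheory.setIntegral_congr_fun measurableSet_Ioc (fun k _ => norm_Fc_sq t k)

lemma bessel (t : ℝ) (u : Finset ℤ) :
    ∑ n ∈ u, ‖fourierCoeff (⇑(Fc t)) n‖^2 ≤ B t := by
  have h1 : ∀ n : ℤ, fourierCoeff (⇑(Fc t)) n
      = inner (𝕜 := ℂ) (fourierLp 2 n)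
          (ContinuousMap.toLp (E := ℂ) 2 (haarAddCircle (T := 2*π)) ℂ (Fc t)) := by
    intro n
    rw [← fourierCoeff_toLp (Fc t) n, ← fourierBasis_repr, HilbertBasis.repr_apply_apply,
      coe_fourierBasis]
  calc ∑ n ∈ u, ‖fourierCoeff (⇑(Fc t)) n‖^2
      = ∑ n ∈ u, ‖inner (𝕜 := ℂ) (fourierLp 2 n)
          (ContinuousMap.toLp (E := ℂ) 2 (haarAddCircle (T := 2*π)) ℂ (Fc t))‖^2 := by
        simp_rw [h1]
    _ ≤ ‖ContinuousMap.toLp (E := ℂ) 2 (haarAddCircle (T := 2*π)) ℂ (Fc t)‖^2 :=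
        orthonormal_fourier.sum_inner_products_le _
    _ = B t := norm_toLp_Fc t

lemma hk1_eq_Ioc (t : ℝ) (x : ℤ) :
    hk1 t x = (1/(2*π)) * ∫ k in Ioc (-π) π,
      Real.exp (t*(Real.cos k - 1)) * Real.cos (k*(x:ℝ)) := by
  rw [hk1, MeasureTheory.integral_Icc_eq_integral_Ioc]

lemma g_eq_Ioc (t : ℝ) (x : ℤ) :
    g t x = (1/(2*π)) * ∫ k in Ioc (-π) π,
      Real.exp (t*(Real.cos k - 1)) * (Real.cos (k*((x:ℝ)+1)) - Real.cos (k*(x:ℝ))) := by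
  rw [g, hk1_eq_Ioc, hk1_eq_Ioc, ← mul_sub]
  congr 1
  rw [← MeasureTheory.integral_sub ((cont_integrand t (x+1)).integrableOn_Ioc)
    ((cont_integrand t x).integrableOn_Ioc)]
  refine MeasureTheory.setIntegral_congr_fun measurableSet_Ioc (fun k _ => ?_)
  push_cast
  ring

lemma re_fourierCoeff (t : ℝ) (x : ℤ) :
    (fourierCoeff (⇑(Fc t)) (-x)).re = g t x := by
  rw [fourierCoeff_eq_intervalIntegral _ _ (-π), show -π + 2*π = π by ring, neg_neg]
  have hcont : Continuous fun k : ℝ => (Real.exp (t*(Real.cos k - 1)) : ℂ) *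
      (Complex.exp (((k*((x:ℝ)+1) : ℝ):ℂ) * Complex.I)
        - Complex.exp (((k*(x:ℝ) : ℝ):ℂ) * Complex.I)) := by
    apply Continuous.mul
    · exact Complex.continuous_ofReal.comp (by fun_prop)
    · apply Continuous.sub
      · exact Complex.continuous_exp.comp
          ((Complex.continuous_ofReal.comp (by fun_prop)).mul continuous_const)
      · exact Complex.continuous_exp.comp
          ((Complex.continuous_ofReal.comp (by fun_prop)).mul continuous_const)
  have hcong : (∫ k in (-π)..π, (fourier x (k : AddCircle (2*π)) : ℂ) • Fc t (k : AddCircle (2*π)))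
      = ∫ k in (-π)..π, (Real.exp (t*(Real.cos k - 1)) : ℂ) *
        (Complex.exp (((k*((x:ℝ)+1) : ℝ):ℂ) * Complex.I)
          - Complex.exp (((k*(x:ℝ) : ℝ):ℂ) * Complex.I)) := by
    apply intervalIntegral.integral_congr
    intro k _
    dsimp only
    rw [smul_eq_mul, fourier_coe, Fc_coe]
    rw [show ((k*((x:ℝ)+1) : ℝ):ℂ) * Complex.I
        = (x:ℂ)*(k:ℂ)*Complex.I + (k:ℂ)*Complex.I by push_cast; ring,
      Complex.exp_add,
      show ((k*(x:ℝ) : ℝ):ℂ) * Complex.I = (x:ℂ)*(k:ℂ)*Complex.I by push_cast; ring]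
    ring
  rw [hcong, intervalIntegral.integral_of_le neg_pi_le_pi, Complex.smul_re,
    ← RCLike.re_to_complex, ← _root_.integral_re hcont.integrableOn_Ioc]
  have hre : ∀ k : ℝ, RCLike.re ((Real.exp (t*(Real.cos k - 1)) : ℂ) *
      (Complex.exp (((k*((x:ℝ)+1) : ℝ):ℂ) * Complex.I)
        - Complex.exp (((k*(x:ℝ) : ℝ):ℂ) * Complex.I)))
      = Real.exp (t*(Real.cos k - 1)) * (Real.cos (k*((x:ℝ)+1)) - Real.cos (k*(x:ℝ))) := by
    intro k
    rw [RCLike.re_to_complex, Complex.re_ofReal_mul, Complex.sub_re,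
      Complex.exp_ofReal_mul_I_re, Complex.exp_ofReal_mul_I_re]
  rw [MeasureTheory.setIntegral_congr_fun measurableSet_Ioc (fun k _ => hre k), g_eq_Ioc]
  simp [smul_eq_mul]

lemma sum_g_sq_le (t : ℝ) (u : Finset ℤ) : ∑ x ∈ u, (g t x)^2 ≤ B t := by
  have h : ∀ x : ℤ, (g t x)^2 ≤ ‖fourierCoeff (⇑(Fc t)) (-x)‖^2 := by
    intro x
    rw [← re_fourierCoeff t x]
    have h1 := Complex.abs_re_le_norm (fourierCoeff (⇑(Fc t)) (-x))
    calc ((fourierCoeff (⇑(Fc t)) (-x)).re)^2 = |(fourierCoeff (⇑(Fc t)) (-x)).re|^2 :=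
        (_root_.sq_abs _).symm
      _ ≤ (‖fourierCoeff (⇑(Fc t)) (-x)‖)^2 := by
        apply pow_le_pow_left₀ (abs_nonneg _) h1
  calc ∑ x ∈ u, (g t x)^2 ≤ ∑ x ∈ u, ‖fourierCoeff (⇑(Fc t)) (-x)‖^2 :=
      Finset.sum_le_sum (fun x _ => h x)
    _ = ∑ n ∈ u.image (fun x : ℤ => -x), ‖fourierCoeff (⇑(Fc t)) n‖^2 :=
      (Finset.sum_image (f := fun n : ℤ => ‖fourierCoeff (⇑(Fc t)) n‖^2) (g := fun x : ℤ => -x)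
        (by intro a _ b _ hab; simpa using hab)).symm
    _ ≤ B t := bessel t _


/-! ### The integral of `B` over `(0, ∞)` is at most 1 -/

noncomputable def f2 (t k : ℝ) : ℝ := Real.exp (t * (2*(Real.cos k - 1))) * (2 - 2*Real.cos k)

lemma continuous_f2 : Continuous (Function.uncurry f2) := by
  unfold Function.uncurry f2
  fun_prop

lemma inner_int_le (M : ℝ) (hM : 0 ≤ M) (k : ℝ) :
    ∫ t in Ioc 0 M, f2 t k ≤ 1 := by
  rcases eq_or_lt_of_le (Real.cos_le_one k) with h1 | h1
  · have hz : (2 - 2*Real.cos k) = 0 := by rw [h1]; ring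
    have hzz : ∀ t, f2 t k = 0 := by intro t; rw [f2, hz, mul_zero]
    simp only [hzz, MeasureTheory.integral_zero]
    norm_num
  · have ha0 : 2*(Real.cos k - 1) < 0 := by linarith
    have hne : 2*(Real.cos k - 1) ≠ 0 := ha0.ne
    have hcalc : ∫ t in Ioc 0 M, f2 t k = 1 - Real.exp (M * (2*(Real.cos k - 1))) := by
      rw [← intervalIntegral.integral_of_le hM]
      have hcong : ∀ t ∈ uIcc 0 M,
          f2 t k = Real.exp (t * (2*(Real.cos k - 1))) * (-(2*(Real.cos k - 1))) := by
        intro t _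
        rw [f2]
        congr 1
        ring
      rw [intervalIntegral.integral_congr hcong, intervalIntegral.integral_mul_const,
        intervalIntegral.integral_comp_mul_right Real.exp hne, zero_mul, integral_exp,
        Real.exp_zero, smul_eq_mul]
      have hne' : Real.cos k - 1 ≠ 0 := sub_ne_zero.mpr h1.ne
      field_simp
      ring
    rw [hcalc]
    nlinarith [Real.exp_nonneg (M * (2*(Real.cos k - 1)))]

lemma integral_B_Ioc_le (M : ℝ) (hM : 0 ≤ M) :
    ∫ t in Ioc (0:ℝ) M, B t ≤ 1 := by
  have hpi := Real.pi_pos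
  have hint : Integrable (Function.uncurry f2)
      ((volume.restrict (Ioc (0:ℝ) M)).prod (volume.restrict (Icc (-π) π))) := by
    rw [MeasureTheory.Measure.prod_restrict]
    refine MeasureTheory.IntegrableOn.mono_set ?_
      (Set.prod_mono Ioc_subset_Icc_self le_rfl)
    exact continuous_f2.continuousOn.integrableOn_compact (isCompact_Icc.prod isCompact_Icc)
  have hswap := MeasureTheory.integral_integral_swap
    (μ := volume.restrict (Ioc (0:ℝ) M)) (ν := volume.restrict (Icc (-π) π)) hint
  have hBform : ∀ t, B t = (1/(2*π)) * ∫ k in Icc (-π) π, f2 t k := by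
    intro t; rw [B]; rfl
  calc ∫ t in Ioc (0:ℝ) M, B t
      = (1/(2*π)) * ∫ t in Ioc (0:ℝ) M, ∫ k in Icc (-π) π, f2 t k := by
        simp_rw [hBform]
        rw [MeasureTheory.integral_const_mul]
    _ = (1/(2*π)) * ∫ k in Icc (-π) π, ∫ t in Ioc (0:ℝ) M, f2 t k := by rw [hswap]
    _ ≤ (1/(2*π)) * ∫ k in Icc (-π) π, (1:ℝ) := by
        apply mul_le_mul_of_nonneg_left _ (by positivity)
        apply MeasureTheory.integral_mono_of_nonneg
        · filter_upwards with k
          apply MeasureTheory.setIntegral_nonneg measurableSet_Ioc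
          intro t _
          have := Real.cos_le_one k
          exact mul_nonneg (Real.exp_nonneg _) (by linarith)
        · exact MeasureTheory.integrableOn_const measure_Icc_lt_top.ne
        · filter_upwards with k using inner_int_le M hM k
    _ ≤ 1 := by
        rw [MeasureTheory.setIntegral_const, smul_eq_mul, mul_one,
          Real.volume_real_Icc_of_le neg_pi_le_pi, show π - -π = 2*π by ring]
        field_simp
        exact le_rfl

lemma B_integrableOn : MeasureTheory.IntegrableOn B (Ioi (0:ℝ)) := by
  apply MeasureTheory.integrableOn_Ioi_of_intervalIntegral_norm_bounded 1 0
    (f := B) (b := fun n : ℕ => (n:ℝ)) (l := Filter.atTop)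
    (fun n => continuous_B.integrableOn_Ioc) tendsto_natCast_atTop_atTop
  filter_upwards with n
  have : ∀ t, ‖B t‖ = B t := fun t => Real.norm_of_nonneg (B_nonneg t)
  simp_rw [this]
  rw [intervalIntegral.integral_of_le (Nat.cast_nonneg n)]
  exact integral_B_Ioc_le n (Nat.cast_nonneg n)

lemma B_integral_le : ∫ t in Ioi (0:ℝ), B t ≤ 1 := by
  have htend := MeasureTheory.intervalIntegral_tendsto_integral_Ioi 0 B_integrableOn
    (tendsto_natCast_atTop_atTop (R := ℝ))
  apply le_of_tendsto htend
  filter_upwards with n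
  rw [intervalIntegral.integral_of_le (Nat.cast_nonneg n)]
  exact integral_B_Ioc_le n (Nat.cast_nonneg n)

lemma G_le_B (t : ℝ) (x : ℤ) : |g t x| * |g t (x-1)| ≤ B t := by
  have hx : x ≠ x - 1 := by omega
  have hsum := sum_g_sq_le t {x, x-1}
  rw [Finset.sum_pair hx] at hsum
  nlinarith [_root_.sq_abs (g t x), _root_.sq_abs (g t (x-1)), sq_nonneg (|g t x| - |g t (x-1)|),
    abs_nonneg (g t x), abs_nonneg (g t (x-1))]

lemma G_integrableOn (x : ℤ) :
    MeasureTheory.IntegrableOn (fun t => |g t x| * |g t (x-1)|) (Ioi (0:ℝ)) := by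
  apply MeasureTheory.Integrable.mono B_integrableOn
  · exact ((continuous_g x).abs.mul (continuous_g (x-1)).abs).aestronglyMeasurable
  · filter_upwards with t
    rw [Real.norm_of_nonneg (mul_nonneg (abs_nonneg _) (abs_nonneg _)),
      Real.norm_of_nonneg (B_nonneg t)]
    exact G_le_B t x


lemma sum_G_le (t : ℝ) (s : Finset ℤ) (h1 : (1:ℤ) ∈ s) :
    ∑ x ∈ s, |g t x| * |g t (x-1)| ≤ B t - (1/2)*(|g t 1| - |g t 0|)^2 := by
  classical
  have hid : ∀ x : ℤ, |g t x| * |g t (x-1)|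
      = (1/2)*(g t x)^2 + (1/2)*(g t (x-1))^2 - (1/2)*(|g t x| - |g t (x-1)|)^2 := by
    intro x
    have ha := _root_.sq_abs (g t x)
    have hb := _root_.sq_abs (g t (x-1))
    linear_combination (1/2)*ha + (1/2)*hb
  have hsplit : ∑ x ∈ s, (|g t x| * |g t (x-1)|)
      = (∑ x ∈ s, ((1/2)*(g t x)^2 + (1/2)*(g t (x-1))^2))
        - ∑ x ∈ s, (1/2)*(|g t x| - |g t (x-1)|)^2 := by
    rw [← Finset.sum_sub_distrib]
    exact Finset.sum_congr rfl (fun x _ => by rw [hid x])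
  have hcorr : (1/2)*(|g t 1| - |g t 0|)^2
      ≤ ∑ x ∈ s, (1/2)*(|g t x| - |g t (x-1)|)^2 := by
    have := Finset.single_le_sum (f := fun x : ℤ => (1/2)*(|g t x| - |g t (x-1)|)^2)
      (fun x _ => by positivity) h1
    simpa using this
  have hmain : ∑ x ∈ s, ((1/2)*(g t x)^2 + (1/2)*(g t (x-1))^2) ≤ B t := by
    set u : Finset ℤ := s ∪ s.image (fun x => x - 1) with hu
    have hS : (0:ℝ) ≤ ∑ x ∈ u, (g t x)^2 :=
      Finset.sum_nonneg (fun x _ => sq_nonneg _)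
    have hs1 : ∑ x ∈ s, (1/2)*(g t x)^2 ≤ (1/2) * ∑ x ∈ u, (g t x)^2 := by
      rw [← Finset.mul_sum]
      apply mul_le_mul_of_nonneg_left _ (by norm_num)
      exact Finset.sum_le_sum_of_subset_of_nonneg Finset.subset_union_left
        (fun x _ _ => sq_nonneg _)
    have hs2 : ∑ x ∈ s, (1/2)*(g t (x-1))^2 ≤ (1/2) * ∑ x ∈ u, (g t x)^2 := by
      rw [← Finset.mul_sum]
      apply mul_le_mul_of_nonneg_left _ (by norm_num)
      have himg : ∑ x ∈ s, (g t (x-1))^2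
          = ∑ y ∈ s.image (fun x : ℤ => x - 1), (g t y)^2 :=
        (Finset.sum_image (f := fun y : ℤ => (g t y)^2) (g := fun x : ℤ => x - 1)
          (by intro a _ b _ hab; simpa using hab)).symm
      rw [himg]
      exact Finset.sum_le_sum_of_subset_of_nonneg Finset.subset_union_right
        (fun x _ _ => sq_nonneg _)
    calc ∑ x ∈ s, ((1/2)*(g t x)^2 + (1/2)*(g t (x-1))^2)
        = ∑ x ∈ s, (1/2)*(g t x)^2 + ∑ x ∈ s, (1/2)*(g t (x-1))^2 :=
          Finset.sum_add_distrib
      _ ≤ (1/2) * ∑ x ∈ u, (g t x)^2 + (1/2) * ∑ x ∈ u, (g t x)^2 := add_le_add hs1 hs2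
      _ = ∑ x ∈ u, (g t x)^2 := by ring
      _ ≤ B t := sum_g_sq_le t u
  linarith

/-- the indicator correction -/
noncomputable def ind : ℝ → ℝ := Set.indicator (Ioc (0:ℝ) (1/8)) (fun _ => (1/8:ℝ))

lemma ind_integrableOn : MeasureTheory.IntegrableOn ind (Ioi (0:ℝ)) := by
  have : MeasureTheory.Integrable ind volume := by
    apply MeasureTheory.IntegrableOn.integrable_indicator _ measurableSet_Ioc
    exact MeasureTheory.integrableOn_const measure_Ioc_lt_top.ne
  exact this.integrableOn

lemma ind_integral : ∫ t in Ioi (0:ℝ), ind t = 1/64 := by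
  rw [ind, MeasureTheory.integral_indicator measurableSet_Ioc,
    MeasureTheory.Measure.restrict_restrict measurableSet_Ioc,
    Set.inter_eq_left.mpr (fun x hx => hx.1),
    MeasureTheory.setIntegral_const, smul_eq_mul,
    Real.volume_real_Ioc_of_le (by norm_num : (0:ℝ) ≤ 1/8)]
  norm_num

lemma pointwise_bound {t : ℝ} (ht : t ∈ Ioi (0:ℝ)) (s : Finset ℤ) (h1 : (1:ℤ) ∈ s) :
    ∑ x ∈ s, |g t x| * |g t (x-1)| ≤ B t - ind t := by
  refine (sum_G_le t s h1).trans ?_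
  rcases le_or_gt t (1/8) with h8 | h8
  · have := corr_bound (Set.mem_Ioc.mpr ⟨Set.mem_Ioi.mp ht, h8⟩)
    have hind : ind t = 1/8 := Set.indicator_of_mem (Set.mem_Ioc.mpr ⟨Set.mem_Ioi.mp ht, h8⟩) _
    linarith
  · have hind : ind t = 0 := Set.indicator_of_notMem (fun h => absurd h.2 (not_le.mpr h8)) _
    have : (0:ℝ) ≤ (1/2)*(|g t 1| - |g t 0|)^2 := by positivity
    linarith

end Stmt10

/-- Absolute-value bound on the gradient product:
`Σ_x ∫_0^∞ |∇⁺p_t(x)·∇⁻p_t(x)| dt < 1`. -/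
theorem stmt10 :
    ∑' x : ℤ, ∫ t in Set.Ioi (0:ℝ),
      |(hk1 t (x+1) - hk1 t x) * (hk1 t (x-1) - hk1 t x)| < 1 := by
  classical
  open Stmt10 in
  have hGeq : ∀ x : ℤ, (fun t : ℝ => |(hk1 t (x+1) - hk1 t x) * (hk1 t (x-1) - hk1 t x)|)
      = fun t : ℝ => |Stmt10.g t x| * |Stmt10.g t (x-1)| := by
    intro x
    funext t
    rw [abs_mul]
    congr 1
    have hneg : hk1 t (x-1) - hk1 t x = -(Stmt10.g t (x-1)) := by
      rw [Stmt10.g, show x - 1 + 1 = x by ring]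
      ring
    rw [hneg, abs_neg]
  have key : ∀ s : Finset ℤ, (∑ x ∈ s, ∫ t in Set.Ioi (0:ℝ),
      |(hk1 t (x+1) - hk1 t x) * (hk1 t (x-1) - hk1 t x)|) ≤ 1 - 1/64 := by
    intro s
    have step1 : (∑ x ∈ s, ∫ t in Set.Ioi (0:ℝ),
        |(hk1 t (x+1) - hk1 t x) * (hk1 t (x-1) - hk1 t x)|)
        ≤ ∑ x ∈ insert (1:ℤ) s, ∫ t in Set.Ioi (0:ℝ),
          |(hk1 t (x+1) - hk1 t x) * (hk1 t (x-1) - hk1 t x)| :=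
      Finset.sum_le_sum_of_subset_of_nonneg (Finset.subset_insert _ _)
        (fun x _ _ => MeasureTheory.integral_nonneg (fun t => abs_nonneg _))
    refine step1.trans ?_
    set s' : Finset ℤ := insert (1:ℤ) s with hs'
    have h1s : (1:ℤ) ∈ s' := Finset.mem_insert_self _ _
    have step2 : (∑ x ∈ s', ∫ t in Set.Ioi (0:ℝ),
        |(hk1 t (x+1) - hk1 t x) * (hk1 t (x-1) - hk1 t x)|)
        = ∫ t in Set.Ioi (0:ℝ), ∑ x ∈ s', |Stmt10.g t x| * |Stmt10.g t (x-1)| := by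
      rw [MeasureTheory.integral_finset_sum s' (fun x _ => Stmt10.G_integrableOn x)]
      exact Finset.sum_congr rfl (fun x _ => by rw [hGeq x])
    rw [step2]
    have step3 : ∫ t in Set.Ioi (0:ℝ), ∑ x ∈ s', |Stmt10.g t x| * |Stmt10.g t (x-1)|
        ≤ ∫ t in Set.Ioi (0:ℝ), (Stmt10.B t - Stmt10.ind t) := by
      apply MeasureTheory.setIntegral_mono_on
      · exact MeasureTheory.integrable_finset_sum s' (fun x _ => Stmt10.G_integrableOn x)
      · exact Stmt10.B_integrableOn.sub Stmt10.ind_integrableOn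
      · exact measurableSet_Ioi
      · intro t ht
        exact Stmt10.pointwise_bound ht s' h1s
    refine step3.trans ?_
    rw [MeasureTheory.integral_sub Stmt10.B_integrableOn Stmt10.ind_integrableOn,
      Stmt10.ind_integral]
    linarith [Stmt10.B_integral_le]
  have htsum := tsum_le_of_sum_le' (L := SummationFilter.unconditional ℤ) (by norm_num : (0:ℝ) ≤ 1 - 1/64) key
  linarith
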